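/- Let A be a parity check matrix of the Hamming code of length n_a = (q^{um}−1)/(q^u−1) over F_{q^u}, and R = [I_{n_b−1} | −1^T] the parity check matrix of the q-ary repetition code of length n_b, where 4 ≤ n_b ≤ (q^u−1)n_a + 1. Then the code over F_{q^u} with parity check matrix A ⊗ R has covering radius n_b − 1. -/

import Mathlib

open Matrix Kronecker

/-- H is a parity check matrix of a Hamming code: its columns are nonzero, pairwise
non-proportional, and represent all 1-dimensional subspaces of F^m. -/
def IsHammingPCM {F : Type*} [Field F] {m n : ℕ} (H : Matrix (Fin m) (Fin n) F) : Prop :=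
  (∀ j, (fun i => H i j) ≠ (0 : Fin m → F)) ∧
  (∀ j j' : Fin n, j ≠ j' → ∀ c : F, (fun i => H i j) ≠ c • (fun i => H i j')) ∧
  (∀ x : Fin m → F, x ≠ 0 → ∃ (j : Fin n) (c : F), x = c • (fun i => H i j))

/-- The parity check matrix [I_{n-1} | −1ᵀ] of the repetition code of length n. -/
def repPCM (F : Type*) [Field F] (n : ℕ) : Matrix (Fin (n - 1)) (Fin n) F :=
  Matrix.of fun i j => if (j : ℕ) = (i : ℕ) then 1 else if (j : ℕ) = n - 1 then -1 else 0

section Helpers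

variable {L : Type} [Field L] [Fintype L] [DecidableEq L] {m na : ℕ}

/-- A one-point section of the syndrome map of a Hamming PCM. -/
lemma ham_section (A : Matrix (Fin m) (Fin na) L) (hA : IsHammingPCM A) (hna : 0 < na) :
    ∃ φ : (Fin m → L) → (Fin na → L), φ 0 = 0 ∧
      ∀ v, A.mulVec (φ v) = v ∧ ∃ j, ∀ j', j' ≠ j → φ v j' = 0 := by
  classical
  obtain ⟨-, -, h3⟩ := hA
  choose j c hc using h3
  refine ⟨fun v => if h : v = 0 then 0 else fun j' => if j' = j v h then c v h else 0,
    by simp, fun v => ?_⟩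
  by_cases h : v = 0
  · subst h
    simp only [dif_pos]
    exact ⟨Matrix.mulVec_zero A, ⟨0, hna⟩, fun _ _ => rfl⟩
  · simp only [dif_neg h]
    constructor
    · funext i
      have hv := hc v h
      simp only [Matrix.mulVec, dotProduct]
      rw [Finset.sum_eq_single (j v h)]
      · rw [if_pos rfl]
        conv_rhs => rw [hv]
        simp [mul_comm]
      · intro b _ hb
        rw [if_neg hb, mul_zero]
      · simp
    · exact ⟨j v h, fun j' hj' => if_neg hj'⟩

/-- Counting: the columns of a Hamming PCM enumerate the projective space, so
`|L|^m = (|L|-1) * na + 1`. -/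
lemma ham_card (A : Matrix (Fin m) (Fin na) L) (hA : IsHammingPCM A) :
    Fintype.card (Fin m → L) = (Fintype.card L - 1) * na + 1 := by
  classical
  obtain ⟨h1, h2, h3⟩ := hA
  have hf : Function.Bijective (fun p : {c : L // c ≠ 0} × Fin na =>
      (⟨(p.1 : L) • fun i => A i p.2, smul_ne_zero p.1.2 (h1 p.2)⟩ :
        {v : Fin m → L // v ≠ 0})) := by
    constructor
    · rintro ⟨⟨cc, hcc⟩, jj⟩ ⟨⟨cc', hcc'⟩, jj'⟩ heq
      simp only [Subtype.mk.injEq, Prod.mk.injEq] at heq ⊢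
      by_cases hj : jj = jj'
      · subst hj
        refine ⟨?_, rfl⟩
        by_contra hne
        have : (cc - cc') • (fun i => A i jj) = 0 := by
          rw [sub_smul, heq, sub_self]
        rcases smul_eq_zero.1 this with h | h
        · exact hne (sub_eq_zero.1 h)
        · exact h1 jj h
      · exfalso
        apply h2 jj jj' hj (cc⁻¹ * cc')
        rw [mul_smul, ← heq, smul_smul, inv_mul_cancel₀ hcc, one_smul]
    · rintro ⟨v, hv⟩
      obtain ⟨jj, cc, hcv⟩ := h3 v hv
      have hcc : cc ≠ 0 := by
        rintro rfl
        rw [zero_smul] at hcv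
        exact hv hcv
      exact ⟨⟨⟨cc, hcc⟩, jj⟩, Subtype.ext hcv.symm⟩
  have hcard := Fintype.card_congr (Equiv.ofBijective _ hf)
  rw [Fintype.card_prod, Fintype.card_fin] at hcard
  have hL1 : Fintype.card {c : L // c ≠ 0} = Fintype.card L - 1 := by
    rw [Fintype.card_subtype, Finset.filter_ne', Finset.card_erase_of_mem (Finset.mem_univ _),
      Finset.card_univ]
  have hV1 : Fintype.card {v : Fin m → L // v ≠ 0} = Fintype.card (Fin m → L) - 1 := by
    rw [Fintype.card_subtype, Finset.filter_ne', Finset.card_erase_of_mem (Finset.mem_univ _),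
      Finset.card_univ]
  rw [hL1, hV1] at hcard
  have hpos : 0 < Fintype.card (Fin m → L) := Fintype.card_pos
  omega

variable {K : Type} [Field K] [Algebra K L] {nb : ℕ}

/-- Entrywise formula for the parity checks of the Kronecker product with the
repetition code PCM. -/
lemma kron_mulVec (hnb : 1 ≤ nb) (A : Matrix (Fin m) (Fin na) L)
    (c : Fin na × Fin nb → L) (i : Fin m) (k : Fin (nb - 1)) (k' lst : Fin nb)
    (hk' : (k' : ℕ) = (k : ℕ)) (hlst : (lst : ℕ) = nb - 1) :
    (A ⊗ₖ (repPCM K nb).map (algebraMap K L)).mulVec c (i, k)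
      = A.mulVec (fun j => c (j, k')) i - A.mulVec (fun j => c (j, lst)) i := by
  classical
  have hkval : (k : ℕ) < nb - 1 := k.2
  have hne : k' ≠ lst := fun h => by rw [Fin.ext_iff, hk', hlst] at h; omega
  simp only [Matrix.mulVec, dotProduct]
  rw [Fintype.sum_prod_type]
  have key : ∀ j l, (A ⊗ₖ (repPCM K nb).map (algebraMap K L)) (i, k) (j, l) * c (j, l)
      = (if l = k' then A i j * c (j, k') else 0)
        + (if l = lst then -(A i j * c (j, lst)) else 0) := by
    intro j l
    simp only [Matrix.kroneckerMap_apply, Matrix.map_apply, repPCM, Matrix.of_apply]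
    by_cases h1 : (l : ℕ) = (k : ℕ)
    · have hlk : l = k' := Fin.ext (by rw [hk']; exact h1)
      rw [hlk, if_pos hk', if_pos rfl, if_neg hne, _root_.map_one]
      ring
    · by_cases h2 : (l : ℕ) = nb - 1
      · have hll : l = lst := Fin.ext (by rw [hlst]; exact h2)
        rw [hll, if_neg (by rw [hlst]; omega), if_pos hlst, if_neg (Ne.symm hne),
          if_pos rfl, _root_.map_neg, _root_.map_one]
        ring
      · rw [if_neg h1, if_neg h2, _root_.map_zero,
          if_neg (fun h => h1 (by rw [h]; exact hk')),
          if_neg (fun h => h2 (by rw [h]; exact hlst))]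
        ring
  calc (∑ j, ∑ l, (A ⊗ₖ (repPCM K nb).map (algebraMap K L)) (i, k) (j, l) * c (j, l))
      = ∑ j, (A i j * c (j, k') + -(A i j * c (j, lst))) := by
        refine Finset.sum_congr rfl fun j _ => ?_
        rw [Finset.sum_congr rfl fun l _ => key j l, Finset.sum_add_distrib]
        simp
    _ = (∑ j, A i j * c (j, k')) - ∑ j, A i j * c (j, lst) := by
        rw [Finset.sum_add_distrib, sub_eq_add_neg]
        congr 1
        rw [← Finset.sum_neg_distrib]

end Helpers

/-- The code over F_{q^u} with parity check matrix A ⊗ R, where A is a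
Hamming PCM over F_{q^u} and R the repetition-code PCM over F_q, with
4 ≤ n_b ≤ (q^u−1)n_a + 1, has covering radius n_b − 1. -/
theorem kronecker_repetition_covering_radius
    {q u m na nb : ℕ} (K L : Type) [Field K] [Fintype K] [DecidableEq K]
    [Field L] [Fintype L] [DecidableEq L] [Algebra K L]
    (hq : Fintype.card K = q) (hL : Fintype.card L = q ^ u)
    (hu : 1 ≤ u) (hm : 2 ≤ m)
    (hnb₁ : 4 ≤ nb) (hnb₂ : nb ≤ (q ^ u - 1) * na + 1)
    (A : Matrix (Fin m) (Fin na) L) (hA : IsHammingPCM A) :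
    (∀ x : Fin na × Fin nb → L, ∃ c : Fin na × Fin nb → L,
        (A ⊗ₖ (repPCM K nb).map (algebraMap K L)).mulVec c = 0 ∧
          hammingDist x c ≤ nb - 1) ∧
      (∃ x : Fin na × Fin nb → L, ∀ c : Fin na × Fin nb → L,
        (A ⊗ₖ (repPCM K nb).map (algebraMap K L)).mulVec c = 0 →
          nb - 1 ≤ hammingDist x c) := by
  classical
  have hna : 0 < na := by
    rcases Nat.eq_zero_or_pos na with h | h
    · subst h; omega
    · exact h
  obtain ⟨φ, hφ0, hφ⟩ := ham_section A hA hna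
  set lst : Fin nb := ⟨nb - 1, by omega⟩ with hlstdef
  have hlstval : (lst : ℕ) = nb - 1 := rfl
  constructor
  · -- upper bound: covering radius ≤ nb - 1
    intro x
    set s : Fin m → L := A.mulVec (fun j => x (j, lst)) with hs
    set z : Fin nb → Fin na → L := fun l => φ (A.mulVec (fun j => x (j, l)) - s) with hz
    have hzcol : ∀ l : Fin nb, A.mulVec (fun j => x (j, l) - z l j) = s := by
      intro l
      have h1 := (hφ (A.mulVec (fun j => x (j, l)) - s)).1
      have he : (fun j => x (j, l) - z l j) = (fun j => x (j, l)) - z l := rfl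
      rw [he, Matrix.mulVec_sub, hz, h1]
      abel
    have hzlst : z lst = 0 := by
      rw [hz]; simp only [← hs, sub_self]; exact hφ0
    refine ⟨fun p => x p - z p.2 p.1, ?_, ?_⟩
    · funext ik
      obtain ⟨i, k⟩ := ik
      rw [kron_mulVec (by omega) A _ i k ⟨k.1, by omega⟩ lst rfl hlstval]
      rw [show (fun j => x (j, ⟨k.1, by omega⟩) - z ⟨k.1, by omega⟩ j)
            = fun j => x (j, (⟨k.1, by omega⟩ : Fin nb)) - z ⟨k.1, by omega⟩ j from rfl]
      rw [congrFun (hzcol ⟨k.1, by omega⟩) i, congrFun (hzcol lst) i]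
      simp
    · -- distance bound
      unfold hammingDist
      have hsubset : ∀ p : Fin na × Fin nb, x p ≠ x p - z p.2 p.1 → p.2 ∈ Finset.univ.erase lst := by
        intro p hp
        have hz0 : z p.2 p.1 ≠ 0 := fun h => hp (by rw [h, sub_zero])
        refine Finset.mem_erase.2 ⟨?_, Finset.mem_univ _⟩
        intro h2
        rw [h2, hzlst] at hz0
        exact hz0 rfl
      calc ({p : Fin na × Fin nb | x p ≠ x p - z p.2 p.1} : Finset _).card
          ≤ (Finset.univ.erase lst).card := by
            apply Finset.card_le_card_of_injOn Prod.snd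
            · intro p hp
              rw [Finset.mem_coe, Finset.mem_filter] at hp
              exact hsubset p hp.2
            · intro p hp p' hp' hpp
              simp only [Finset.coe_filter, Set.mem_setOf_eq] at hp hp'
              have h1 : z p.2 p.1 ≠ 0 := fun h => hp.2 (by rw [h, sub_zero])
              have h2 : z p'.2 p'.1 ≠ 0 := fun h => hp'.2 (by rw [h, sub_zero])
              obtain ⟨jz, hjz⟩ := (hφ (A.mulVec (fun j => x (j, p.2)) - s)).2
              have e1 : p.1 = jz := by
                by_contra hne; exact h1 (hjz p.1 hne)
              have e2 : p'.1 = jz := by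
                by_contra hne
                apply h2
                show z p'.2 p'.1 = 0
                rw [← hpp]
                exact hjz p'.1 hne
              exact Prod.ext (e1.trans e2.symm) hpp
        _ = nb - 1 := by
            rw [Finset.card_erase_of_mem (Finset.mem_univ _), Finset.card_univ,
              Fintype.card_fin]
  · -- lower bound
    have hcard : nb ≤ Fintype.card (Fin m → L) := by
      rw [ham_card A hA, hL]; exact hnb₂
    obtain ⟨σ⟩ := Function.Embedding.nonempty_of_card_le
      (show Fintype.card (Fin nb) ≤ Fintype.card (Fin m → L) by rwa [Fintype.card_fin])
    refine ⟨fun p => φ (σ p.2) p.1, ?_⟩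
    intro c hc
    set s : Fin m → L := A.mulVec (fun j => c (j, lst)) with hs
    -- all column syndromes of the codeword c equal s
    have hsyn : ∀ l : Fin nb, A.mulVec (fun j => c (j, l)) = s := by
      intro l
      by_cases hl : (l : ℕ) = nb - 1
      · have : l = lst := Fin.ext hl
        rw [this, hs]
      · have hl' : (l : ℕ) < nb - 1 := by have := l.2; omega
        funext i
        have h0 := congrFun hc (i, (⟨l.1, hl'⟩ : Fin (nb - 1)))
        rw [kron_mulVec (by omega) A c i ⟨l.1, hl'⟩ l lst rfl hlstval] at h0
        have : A.mulVec (fun j => c (j, l)) i - A.mulVec (fun j => c (j, lst)) i = 0 := h0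
        rw [sub_eq_zero] at this
        rw [this, hs]
    -- the bad column indices (σ l = s) number at most 1
    have hbad : (Finset.univ.filter fun l : Fin nb => σ l = s).card ≤ 1 := by
      refine Finset.card_le_one.2 fun a ha b hb => ?_
      simp only [Finset.mem_filter] at ha hb
      exact σ.injective (ha.2.trans hb.2.symm)
    have hgood : nb - 1 ≤ (Finset.univ.filter fun l : Fin nb => ¬ σ l = s).card := by
      have := Finset.card_filter_add_card_filter_not
        (s := (Finset.univ : Finset (Fin nb))) (p := fun l => σ l = s)
      rw [Finset.card_univ, Fintype.card_fin] at this
      omega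
    -- each good column contributes a coordinate where x and c differ
    have hx : ∀ l : Fin nb, ¬ σ l = s → ∃ j : Fin na, φ (σ l) j ≠ c (j, l) := by
      intro l hne
      by_contra hcon
      push_neg at hcon
      apply hne
      calc σ l = A.mulVec (φ (σ l)) := ((hφ (σ l)).1).symm
        _ = A.mulVec (fun j => c (j, l)) := by
            rw [show φ (σ l) = fun j => c (j, l) from funext hcon]
        _ = s := hsyn l
    choose jw hjw using hx
    unfold hammingDist
    calc nb - 1 ≤ (Finset.univ.filter fun l : Fin nb => ¬ σ l = s).card := hgood
      _ ≤ ({p : Fin na × Fin nb | φ (σ p.2) p.1 ≠ c p} : Finset _).card := by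
          apply Finset.card_le_card_of_injOn
            (fun l => (if h : ¬ σ l = s then jw l h else ⟨0, hna⟩, l))
          · intro l hl
            rw [Finset.mem_coe, Finset.mem_filter] at hl
            beta_reduce
            rw [dif_pos hl.2]
            simp only [Finset.mem_coe, Finset.mem_filter, Set.mem_setOf_eq, Finset.mem_univ, true_and]
            exact hjw l hl.2
          · intro l _ l' _ h
            exact congrArg Prod.snd h
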